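/- For each n ≥ 0, define P_n(x) = Σ_{k=0}^{n} L_k(x), where L_k denotes the k-th Laguerre polynomial. Then (i) ∫_0^∞ P_n(y) P_n(y(1+x) + x) e^{−y} dy = P_n(x) for all real x, and (ii) the sequence (P_n) is an orthogonal polynomial sequence with respect to the functional L_{yω}[f] = ∫_0^∞ f(y)·y·e^{−y} dy, i.e., ∫_0^∞ P_n(y) P_m(y)·y·e^{−y} dy = 0 for n ≠ m and ≠ 0 for n = m. -/

import Mathlib

open MeasureTheory Set

/-- The Laguerre polynomial `Lₙ(x) = Σ_{k=0}^n (1/k!)(n choose k)(-x)ᵏ`. -/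
noncomputable def laguerreL (n : ℕ) (x : ℝ) : ℝ :=
  ∑ k ∈ Finset.range (n + 1), (1 / (k.factorial : ℝ)) * (n.choose k : ℝ) * (-x) ^ k

open Polynomial

lemma momI (j : ℕ) : IntegrableOn (fun y : ℝ => y ^ j * Real.exp (-y)) (Ioi 0) := by
  have h := Real.GammaIntegral_convergent (s := (j : ℝ) + 1) (by positivity)
  refine (h.congr_fun (fun x hx => ?_) measurableSet_Ioi)
  simp only [add_sub_cancel_right]
  rw [Real.rpow_natCast]
  ring

lemma mom (j : ℕ) : (∫ y in Ioi (0 : ℝ), y ^ j * Real.exp (-y)) = j.factorial := by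
  have h1 : Real.Gamma ((j : ℝ) + 1) = j.factorial := Real.Gamma_nat_eq_factorial j
  rw [Real.Gamma_eq_integral (by positivity : (0:ℝ) < (j:ℝ)+1)] at h1
  rw [← h1]
  refine setIntegral_congr_fun measurableSet_Ioi (fun x hx => ?_)
  simp only [add_sub_cancel_right]
  rw [Real.rpow_natCast]
  ring

lemma FD : ∀ (n : ℕ) (p : Polynomial ℝ), p.degree < n →
    ∑ i ∈ Finset.range (n + 1), (-1 : ℝ) ^ i * (n.choose i) * p.eval (i:ℝ) = 0 := by
  intro n
  induction n with
  | zero =>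
    intro p hp
    have : p = 0 := by
      rw [← Polynomial.degree_eq_bot]
      exact Nat.WithBot.lt_zero_iff.mp (by exact_mod_cast hp)
    simp [this]
  | succ n ih =>
    intro p hp
    by_cases h0 : p = 0
    · simp [h0]
    · set q : Polynomial ℝ := p.comp (X + C 1) - p with hq
      have hdcomp : (p.comp (X + C 1)).natDegree = p.natDegree := by
        rw [Polynomial.natDegree_comp, Polynomial.natDegree_X_add_C, mul_one]
      have hlc : (p.comp (X + C 1)).leadingCoeff = p.leadingCoeff := by
        rw [Polynomial.leadingCoeff_comp (by rw [Polynomial.natDegree_X_add_C]; norm_num),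
          Polynomial.leadingCoeff_X_add_C, one_pow, mul_one]
      have hcomp0 : p.comp (X + C 1) ≠ 0 := by
        intro h
        apply h0
        have := hlc
        rw [h, Polynomial.leadingCoeff_zero] at this
        exact Polynomial.leadingCoeff_eq_zero.mp this.symm
      have hdd : (p.comp (X + C 1)).degree = p.degree := by
        rw [Polynomial.degree_eq_natDegree hcomp0, Polynomial.degree_eq_natDegree h0, hdcomp]
      have hdeg : q.degree < p.degree := by
        rw [hq, ← hdd]
        exact Polynomial.degree_sub_lt hdd hcomp0 hlc
      have hple : p.degree ≤ n := by
        rcases Polynomial.degree_eq_natDegree h0 ▸ hp with h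
        rw [Polynomial.degree_eq_natDegree h0]
        exact_mod_cast Nat.lt_succ_iff.mp (by exact_mod_cast h)
      have hq' : q.degree < n := lt_of_lt_of_le hdeg hple
      have key := ih q hq'
      -- evaluate q
      have hqe : ∀ x : ℝ, q.eval x = p.eval (x + 1) - p.eval x := by
        intro x; simp [hq, Polynomial.eval_comp]
      -- sum manipulation
      have expand : ∑ i ∈ Finset.range (n + 2), (-1 : ℝ) ^ i * ((n+1).choose i) * p.eval (i:ℝ)
          = (∑ i ∈ Finset.range (n + 1), (-1 : ℝ) ^ i * (n.choose i) * p.eval (i:ℝ))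
            - (∑ i ∈ Finset.range (n + 1), (-1 : ℝ) ^ i * (n.choose i) * p.eval ((i:ℝ) + 1)) := by
        have A : ∑ i ∈ Finset.range (n + 2), (-1 : ℝ) ^ i * ((n+1).choose i) * p.eval (i:ℝ)
            = (∑ i ∈ Finset.range (n + 1),
                (-1 : ℝ) ^ (i+1) * ((n+1).choose (i+1)) * p.eval ((i:ℝ)+1)) + p.eval 0 := by
          rw [Finset.sum_range_succ']
          simp
        have B : ∑ i ∈ Finset.range (n + 2), (-1 : ℝ) ^ i * (n.choose i) * p.eval (i:ℝ)
            = (∑ i ∈ Finset.range (n + 1),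
                (-1 : ℝ) ^ (i+1) * (n.choose (i+1)) * p.eval ((i:ℝ)+1)) + p.eval 0 := by
          rw [Finset.sum_range_succ']
          simp
        have B' : ∑ i ∈ Finset.range (n + 2), (-1 : ℝ) ^ i * (n.choose i) * p.eval (i:ℝ)
            = ∑ i ∈ Finset.range (n + 1), (-1 : ℝ) ^ i * (n.choose i) * p.eval (i:ℝ) := by
          rw [Finset.sum_range_succ]
          simp [Nat.choose_eq_zero_of_lt (Nat.lt_succ_self n)]
        rw [A]
        have : ∀ i : ℕ, (-1 : ℝ) ^ (i+1) * ((n+1).choose (i+1)) * p.eval ((i:ℝ)+1)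
            = ((-1 : ℝ) ^ (i+1) * (n.choose (i+1)) * p.eval ((i:ℝ)+1))
              + (-((-1 : ℝ) ^ i * (n.choose i) * p.eval ((i:ℝ)+1))) := by
          intro i
          rw [Nat.choose_succ_succ]
          push_cast
          ring
        rw [Finset.sum_congr rfl (fun i _ => this i), Finset.sum_add_distrib]
        rw [Finset.sum_neg_distrib]
        rw [add_comm, ← add_assoc]
        rw [add_comm (p.eval 0)]
        rw [← B, B']
        ring
      -- now key says sum of q evals is 0
      have key' : ∑ i ∈ Finset.range (n + 1), (-1 : ℝ) ^ i * (n.choose i)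
          * (p.eval ((i:ℝ) + 1) - p.eval (i:ℝ)) = 0 := by
        rw [← key]
        refine Finset.sum_congr rfl (fun i _ => ?_)
        rw [hqe]
      have : ∑ i ∈ Finset.range (n+2), (-1:ℝ)^i * ((n+1).choose i) * p.eval (i:ℝ) = 0 := by
        rw [expand]
        have := key'
        simp only [mul_sub] at this
        rw [Finset.sum_sub_distrib] at this
        linarith
      exact this

noncomputable def pj (j : ℕ) : Polynomial ℝ := ∏ s ∈ Finset.range j, (X + C (s : ℝ))

lemma pj_eval_zero (j : ℕ) : (pj j).eval 0 = if j = 0 then 1 else 0 := by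
  rcases Nat.eq_zero_or_pos j with h | h
  · simp [pj, h]
  · simp only [pj, Polynomial.eval_prod, Polynomial.eval_add, Polynomial.eval_X,
      Polynomial.eval_C, zero_add]
    rw [if_neg (by omega)]
    exact Finset.prod_eq_zero (Finset.mem_range.mpr h) (by norm_num)

lemma pj_degree (j : ℕ) : (pj j).degree ≤ j := by
  unfold pj
  calc (∏ s ∈ Finset.range j, (X + C (s:ℝ))).degree
      ≤ ∑ s ∈ Finset.range j, (X + C (s:ℝ)).degree :=
        Polynomial.degree_prod_le _ _
    _ ≤ ∑ s ∈ Finset.range j, (1 : WithBot ℕ) := by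
        refine Finset.sum_le_sum (fun s _ => ?_)
        rw [Polynomial.degree_X_add_C]
    _ = (j : WithBot ℕ) := by
        rw [Finset.sum_const, Finset.card_range]
        simp [nsmul_eq_mul]

lemma pj_fact (i j : ℕ) :
    ((i + j).factorial : ℝ) = (i.factorial : ℝ) * (pj j).eval ((i : ℝ) + 1) := by
  induction j with
  | zero => simp [pj]
  | succ j ih =>
    have : (pj (j+1)).eval ((i:ℝ)+1) = (pj j).eval ((i:ℝ)+1) * ((i:ℝ) + 1 + j) := by
      simp [pj, Finset.prod_range_succ]
    rw [this, ← add_assoc, Nat.factorial_succ]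
    push_cast
    rw [ih]
    ring

lemma combD (n j : ℕ) (hj : j ≤ n) :
    ∑ k ∈ Finset.range (n + 1), ∑ i ∈ Finset.range (k + 1),
      ((-1 : ℝ) ^ i / i.factorial) * (k.choose i) * ((i + j).factorial)
      = if j = 0 then 1 else 0 := by
  have step1 : ∀ k ∈ Finset.range (n+1),
      ∑ i ∈ Finset.range (k + 1),
        ((-1 : ℝ) ^ i / i.factorial) * (k.choose i) * ((i + j).factorial)
      = ∑ i ∈ Finset.range (n + 1),
          (if i ≤ k then ((-1 : ℝ) ^ i / i.factorial) * (k.choose i) * ((i + j).factorial)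
           else 0) := by
    intro k hk
    rw [Finset.sum_ite, Finset.sum_const_zero, add_zero]
    apply Finset.sum_congr _ (fun _ _ => rfl)
    ext x
    simp only [Finset.mem_filter, Finset.mem_range] at *
    omega
  rw [Finset.sum_congr rfl step1, Finset.sum_comm]
  have step2 : ∀ i ∈ Finset.range (n+1),
      ∑ k ∈ Finset.range (n + 1),
        (if i ≤ k then ((-1 : ℝ) ^ i / i.factorial) * (k.choose i) * ((i + j).factorial)
         else 0)
      = (-1 : ℝ) ^ i * ((n+1).choose (i+1)) * (pj j).eval ((i:ℝ)+1) := by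
    intro i hi
    rw [Finset.sum_ite, Finset.sum_const_zero, add_zero]
    have hfil : (Finset.range (n+1)).filter (fun k => i ≤ k) = Finset.Icc i n := by
      ext x
      simp only [Finset.mem_filter, Finset.mem_range, Finset.mem_Icc]
      omega
    rw [hfil]
    have : ∑ k ∈ Finset.Icc i n,
        ((-1 : ℝ) ^ i / i.factorial) * (k.choose i) * ((i + j).factorial)
        = ((-1 : ℝ) ^ i / i.factorial) * ((i + j).factorial)
          * ∑ k ∈ Finset.Icc i n, (k.choose i : ℝ) := by
      rw [Finset.mul_sum]
      exact Finset.sum_congr rfl (fun k _ => by ring)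
    rw [this]
    have hock : ∑ k ∈ Finset.Icc i n, (k.choose i : ℝ) = ((n+1).choose (i+1) : ℝ) := by
      rw [← Nat.sum_Icc_choose]
      push_cast
      rfl
    rw [hock, pj_fact i j]
    have hfi : (i.factorial : ℝ) ≠ 0 := by positivity
    field_simp
  rw [Finset.sum_congr rfl step2]
  -- apply FD with n+1 and pj j
  have hdeg : (pj j).degree < (n+1 : ℕ) := lt_of_le_of_lt (pj_degree j) (by exact_mod_cast Nat.lt_succ_of_le hj)
  have hFD := FD (n+1) (pj j) hdeg
  rw [Finset.sum_range_succ'] at hFD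
  simp only [Nat.cast_zero, pow_zero, one_mul, Nat.choose_zero_right, Nat.cast_one] at hFD
  have : ∑ i ∈ Finset.range (n + 1),
      (-1:ℝ) ^ (i+1) * ((n+1).choose (i+1)) * (pj j).eval ((i:ℝ)+1)
      = - ∑ i ∈ Finset.range (n + 1),
          (-1:ℝ) ^ i * ((n+1).choose (i+1)) * (pj j).eval ((i:ℝ)+1) := by
    rw [← Finset.sum_neg_distrib]
    exact Finset.sum_congr rfl (fun i _ => by ring)
  rw [← pj_eval_zero j]
  push_cast at hFD
  rw [this] at hFD
  linarith

lemma lemB (n j : ℕ) (hj : j ≤ n) :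
    (∫ y in Ioi (0:ℝ), (∑ k ∈ Finset.range (n+1), laguerreL k y) * y ^ j * Real.exp (-y))
      = if j = 0 then 1 else 0 := by
  have key : ∀ y : ℝ, (∑ k ∈ Finset.range (n+1), laguerreL k y) * y ^ j * Real.exp (-y)
      = ∑ k ∈ Finset.range (n+1), ∑ i ∈ Finset.range (k+1),
          ((-1:ℝ)^i / i.factorial * (k.choose i)) * (y^(i+j) * Real.exp (-y)) := by
    intro y
    rw [Finset.sum_mul, Finset.sum_mul]
    refine Finset.sum_congr rfl fun k _ => ?_
    rw [laguerreL, Finset.sum_mul, Finset.sum_mul]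
    refine Finset.sum_congr rfl fun i _ => ?_
    rw [neg_pow, pow_add]
    ring
  simp only [key]
  rw [MeasureTheory.integral_finset_sum _ (fun k _ =>
    MeasureTheory.integrable_finset_sum _ (fun i _ => ((momI (i+j)).const_mul _)))]
  have : ∀ k ∈ Finset.range (n+1),
      (∫ y in Ioi (0:ℝ), ∑ i ∈ Finset.range (k+1),
        ((-1:ℝ)^i / i.factorial * (k.choose i)) * (y^(i+j) * Real.exp (-y)))
      = ∑ i ∈ Finset.range (k+1),
          ((-1:ℝ)^i / i.factorial) * (k.choose i) * ((i+j).factorial) := by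
    intro k _
    rw [MeasureTheory.integral_finset_sum _ (fun i _ => ((momI (i+j)).const_mul _))]
    refine Finset.sum_congr rfl fun i _ => ?_
    rw [MeasureTheory.integral_const_mul, mom]
  rw [Finset.sum_congr rfl this]
  exact combD n j hj

noncomputable def lagPoly (k : ℕ) : Polynomial ℝ :=
  ∑ i ∈ Finset.range (k + 1), C ((1 / (i.factorial : ℝ)) * (k.choose i) * (-1)^i) * X ^ i

lemma lagPoly_eval (k : ℕ) (x : ℝ) : (lagPoly k).eval x = laguerreL k x := by
  rw [lagPoly, laguerreL]
  rw [Polynomial.eval_finset_sum]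
  refine Finset.sum_congr rfl fun i _ => ?_
  simp only [Polynomial.eval_mul, Polynomial.eval_C, Polynomial.eval_pow, Polynomial.eval_X]
  rw [neg_pow]
  ring

lemma lagPoly_natDegree (k : ℕ) : (lagPoly k).natDegree ≤ k := by
  apply Polynomial.natDegree_sum_le_of_forall_le
  intro i hi
  exact le_trans (Polynomial.natDegree_C_mul_X_pow_le _ _) (Nat.lt_succ_iff.mp (Finset.mem_range.mp hi))

noncomputable def lagSum (n : ℕ) : Polynomial ℝ := ∑ k ∈ Finset.range (n + 1), lagPoly k

lemma lagSum_eval (n : ℕ) (x : ℝ) :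
    (lagSum n).eval x = ∑ k ∈ Finset.range (n+1), laguerreL k x := by
  rw [lagSum, Polynomial.eval_finset_sum]
  exact Finset.sum_congr rfl fun k _ => lagPoly_eval k x

lemma lagSum_natDegree (n : ℕ) : (lagSum n).natDegree ≤ n := by
  apply Polynomial.natDegree_sum_le_of_forall_le
  intro k hk
  exact le_trans (lagPoly_natDegree k) (Nat.lt_succ_iff.mp (Finset.mem_range.mp hk))

lemma polyI (p : Polynomial ℝ) :
    IntegrableOn (fun y : ℝ => p.eval y * Real.exp (-y)) (Ioi 0) := by
  have key : ∀ y : ℝ, p.eval y * Real.exp (-y)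
      = ∑ i ∈ Finset.range (p.natDegree + 1), p.coeff i * (y ^ i * Real.exp (-y)) := by
    intro y
    rw [Polynomial.eval_eq_sum_range, Finset.sum_mul]
    exact Finset.sum_congr rfl fun i _ => by ring
  have : (fun y : ℝ => p.eval y * Real.exp (-y))
      = fun y => ∑ i ∈ Finset.range (p.natDegree + 1), p.coeff i * (y ^ i * Real.exp (-y)) :=
    funext key
  rw [this]
  exact MeasureTheory.integrable_finset_sum _ (fun i _ => (momI i).const_mul _)

lemma lemC (n : ℕ) (p : Polynomial ℝ) (hp : p.natDegree ≤ n) :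
    (∫ y in Ioi (0:ℝ), (∑ k ∈ Finset.range (n+1), laguerreL k y) * p.eval y * Real.exp (-y))
      = p.eval 0 := by
  have key : ∀ y : ℝ, (∑ k ∈ Finset.range (n+1), laguerreL k y) * p.eval y * Real.exp (-y)
      = ∑ j ∈ Finset.range (n+1), p.coeff j *
          ((∑ k ∈ Finset.range (n+1), laguerreL k y) * y ^ j * Real.exp (-y)) := by
    intro y
    rw [Polynomial.eval_eq_sum_range' (Nat.lt_succ_of_le hp), Finset.mul_sum, Finset.sum_mul]
    exact Finset.sum_congr rfl fun j _ => by ring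
  simp only [key]
  have hint : ∀ j : ℕ, IntegrableOn
      (fun y : ℝ => (∑ k ∈ Finset.range (n+1), laguerreL k y) * y ^ j * Real.exp (-y))
      (Ioi 0) := by
    intro j
    have := polyI (lagSum n * X ^ j)
    refine this.congr_fun (fun y _ => ?_) measurableSet_Ioi
    simp only [Polynomial.eval_mul, lagSum_eval, Polynomial.eval_pow, Polynomial.eval_X]
  rw [MeasureTheory.integral_finset_sum _ (fun j _ => (hint j).const_mul _)]
  have : ∀ j ∈ Finset.range (n+1),
      (∫ y in Ioi (0:ℝ), p.coeff j *
        ((∑ k ∈ Finset.range (n+1), laguerreL k y) * y ^ j * Real.exp (-y)))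
      = p.coeff j * (if j = 0 then 1 else 0) := by
    intro j hj
    rw [MeasureTheory.integral_const_mul, lemB n j (Nat.lt_succ_iff.mp (Finset.mem_range.mp hj))]
  rw [Finset.sum_congr rfl this,
    Finset.sum_eq_single_of_mem 0 (Finset.mem_range.mpr (Nat.succ_pos n))
      (fun j _ hj => by simp [hj])]
  simp [Polynomial.coeff_zero_eq_eval_zero]

lemma lag_zero (k : ℕ) : laguerreL k 0 = 1 := by
  rw [laguerreL]
  rw [Finset.sum_eq_single_of_mem 0 (Finset.mem_range.mpr (Nat.succ_pos k))
    (fun i _ hi => by simp [zero_pow hi])]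
  simp

lemma partI (n : ℕ) (x : ℝ) :
    (∫ y in Ioi (0:ℝ), (∑ k ∈ Finset.range (n+1), laguerreL k y)
        * (∑ k ∈ Finset.range (n+1), laguerreL k (y * (1 + x) + x)) * Real.exp (-y))
      = ∑ k ∈ Finset.range (n+1), laguerreL k x := by
  set p : Polynomial ℝ := (lagSum n).comp (C (1 + x) * X + C x) with hpdef
  have hpe : ∀ y : ℝ, (∑ k ∈ Finset.range (n+1), laguerreL k (y * (1 + x) + x)) = p.eval y := by
    intro y
    rw [hpdef, Polynomial.eval_comp]
    simp only [Polynomial.eval_add, Polynomial.eval_mul, Polynomial.eval_C, Polynomial.eval_X]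
    rw [lagSum_eval, mul_comm (1 + x) y]
  have hdeg : p.natDegree ≤ n := by
    refine le_trans Polynomial.natDegree_comp_le ?_
    have h1 : (C (1 + x) * X + C x).natDegree ≤ 1 := by
      refine le_trans (Polynomial.natDegree_add_le _ _) ?_
      simp only [Polynomial.natDegree_C, max_le_iff]
      constructor
      · exact le_trans (Polynomial.natDegree_C_mul_le _ _) (le_of_eq Polynomial.natDegree_X)
      · omega
    calc (lagSum n).natDegree * (C (1 + x) * X + C x).natDegree
        ≤ n * 1 := Nat.mul_le_mul (lagSum_natDegree n) h1
      _ = n := mul_one n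
  simp only [hpe]
  rw [lemC n p hdeg]
  rw [hpdef, Polynomial.eval_comp]
  simp only [Polynomial.eval_add, Polynomial.eval_mul, Polynomial.eval_C, Polynomial.eval_X]
  rw [mul_zero, zero_add, lagSum_eval]

lemma partII (m n : ℕ) (h : m < n) :
    (∫ y in Ioi (0:ℝ), (∑ k ∈ Finset.range (n+1), laguerreL k y)
        * (∑ k ∈ Finset.range (m+1), laguerreL k y) * y * Real.exp (-y)) = 0 := by
  set p : Polynomial ℝ := X * lagSum m with hpdef
  have hdeg : p.natDegree ≤ n := by
    refine le_trans Polynomial.natDegree_mul_le ?_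
    rw [Polynomial.natDegree_X]
    have := lagSum_natDegree m
    omega
  have key : (∫ y in Ioi (0:ℝ), (∑ k ∈ Finset.range (n+1), laguerreL k y)
      * p.eval y * Real.exp (-y)) = p.eval 0 := lemC n p hdeg
  rw [show (fun y : ℝ => (∑ k ∈ Finset.range (n+1), laguerreL k y)
      * (∑ k ∈ Finset.range (m+1), laguerreL k y) * y * Real.exp (-y))
      = fun y : ℝ => (∑ k ∈ Finset.range (n+1), laguerreL k y)
      * p.eval y * Real.exp (-y) from funext fun y => by
        simp only [hpdef, Polynomial.eval_mul, Polynomial.eval_X, lagSum_eval]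
        ring]
  rw [key, hpdef]
  simp

lemma partIII (n : ℕ) :
    (∫ y in Ioi (0:ℝ), (∑ k ∈ Finset.range (n+1), laguerreL k y)
        * (∑ k ∈ Finset.range (n+1), laguerreL k y) * y * Real.exp (-y)) ≠ 0 := by
  set S := lagSum n with hSdef
  set f : ℝ → ℝ := fun y => (∑ k ∈ Finset.range (n+1), laguerreL k y)
      * (∑ k ∈ Finset.range (n+1), laguerreL k y) * y * Real.exp (-y) with hfdef
  have hS0 : S.eval 0 = n + 1 := by
    rw [hSdef, lagSum_eval]
    rw [Finset.sum_congr rfl (fun k _ => lag_zero k)]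
    simp
  have hSne : S ≠ 0 := by
    intro h
    rw [h] at hS0
    simp only [Polynomial.eval_zero] at hS0
    exact Nat.cast_add_one_ne_zero n hS0.symm
  have hfi : IntegrableOn f (Ioi 0) := by
    have := polyI (S * S * X)
    refine this.congr_fun (fun y _ => ?_) measurableSet_Ioi
    simp only [hfdef, Polynomial.eval_mul, Polynomial.eval_X, hSdef, lagSum_eval]
  have hnn : 0 ≤ᵐ[volume.restrict (Ioi (0:ℝ))] f := by
    rw [Filter.EventuallyLE, MeasureTheory.ae_restrict_iff' measurableSet_Ioi]
    filter_upwards with y hy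
    have : (0:ℝ) < y := hy
    have hsq : (0:ℝ) ≤ (∑ k ∈ Finset.range (n+1), laguerreL k y)
        * (∑ k ∈ Finset.range (n+1), laguerreL k y) := mul_self_nonneg _
    have := Real.exp_pos (-y)
    simp only [hfdef, Pi.zero_apply]
    positivity
  have hpos : 0 < ∫ y in Ioi (0:ℝ), f y := by
    rw [MeasureTheory.setIntegral_pos_iff_support_of_nonneg_ae hnn hfi]
    have hsub : Ioi (0:ℝ) \ {y : ℝ | S.IsRoot y} ⊆ Function.support f ∩ Ioi 0 := by
      rintro y ⟨hy, hroot⟩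
      refine ⟨?_, hy⟩
      have hy' : (0:ℝ) < y := hy
      have ha : S.eval y ≠ 0 := hroot
      have ha' : (∑ k ∈ Finset.range (n+1), laguerreL k y) ≠ 0 := by
        rwa [← lagSum_eval]
      simp only [Function.mem_support, hfdef]
      have := Real.exp_pos (-y)
      have h1 : 0 < (∑ k ∈ Finset.range (n+1), laguerreL k y)
          * (∑ k ∈ Finset.range (n+1), laguerreL k y) := mul_self_pos.mpr ha'
      positivity
    have hz : volume {y : ℝ | S.IsRoot y} = 0 :=
      (Polynomial.finite_setOf_isRoot hSne).measure_zero _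
    have : volume (Ioi (0:ℝ) \ {y : ℝ | S.IsRoot y}) = volume (Ioi (0:ℝ)) :=
      MeasureTheory.measure_diff_null hz
    refine lt_of_lt_of_le ?_ (MeasureTheory.measure_mono hsub)
    rw [this, Real.volume_Ioi]
    exact ENNReal.zero_lt_top
  exact ne_of_gt hpos

/-- Laguerre example of Dominici (`ω(y) = e^{-y}` on `(0,∞)`, `ζ = 0`, `τ = 1`, `σ = 1`):
the kernel polynomials `Pₙ(x) = Σ_{k=0}^n Lₖ(x)` satisfy
`∫₀^∞ Pₙ(y) Pₙ(y(1+x)+x) e^{-y} dy = Pₙ(x)` and form an OPS for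
`L_{yω}[f] = ∫₀^∞ f(y)·y·e^{-y} dy`. -/
theorem laguerre_kernel_example (P : ℕ → ℝ → ℝ)
    (hP : ∀ n x, P n x = ∑ k ∈ Finset.range (n + 1), laguerreL k x) :
    (∀ (n : ℕ) (x : ℝ),
      (∫ y in Ioi (0 : ℝ), P n y * P n (y * (1 + x) + x) * Real.exp (-y)) = P n x) ∧
    (∀ n m : ℕ, n ≠ m →
      (∫ y in Ioi (0 : ℝ), P n y * P m y * y * Real.exp (-y)) = 0) ∧
    (∀ n : ℕ, (∫ y in Ioi (0 : ℝ), P n y * P n y * y * Real.exp (-y)) ≠ 0) := by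
  refine ⟨fun n x => ?_, fun n m hnm => ?_, fun n => ?_⟩
  · simp only [hP]
    exact partI n x
  · simp only [hP]
    rcases lt_or_gt_of_ne hnm with h | h
    · rw [show (fun y : ℝ => (∑ k ∈ Finset.range (n+1), laguerreL k y)
          * (∑ k ∈ Finset.range (m+1), laguerreL k y) * y * Real.exp (-y))
          = fun y : ℝ => (∑ k ∈ Finset.range (m+1), laguerreL k y)
          * (∑ k ∈ Finset.range (n+1), laguerreL k y) * y * Real.exp (-y)
          from funext fun y => by ring]
      exact partII n m h
    · exact partII m n h
  · simp only [hP]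
    exact partIII n
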